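/- Let A be an n×n symmetric positive definite real matrix and B an n×m real matrix of full column rank with m < n. Let 𝒜 = [[A, B],[Bᵀ, 0]] and 𝒜̂ = [[A, B],[Bᵀ, -C]] with C = BᵀA⁻¹B. Then every eigenvalue of 𝒜̂⁻¹𝒜 is either 1 (with multiplicity n) or 1/2 (with multiplicity m). -/

import Mathlib

open Matrix

/-- Theorem 2.1: with `C = BᵀA⁻¹B`, every eigenvalue of `𝒜̂⁻¹𝒜` is `1`
(with multiplicity `n`) or `1/2` (with multiplicity `m`). -/
theorem racp_ideal_eigenvalues
    (n m : ℕ) (hmn : m < n)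
    (A : Matrix (Fin n) (Fin n) ℝ) (hA : A.PosDef)
    (B : Matrix (Fin n) (Fin m) ℝ) (hB : B.rank = m)
    (C : Matrix (Fin m) (Fin m) ℝ) (hC : C = Bᵀ * A⁻¹ * B)
    (𝒜 : Matrix (Fin n ⊕ Fin m) (Fin n ⊕ Fin m) ℝ)
    (h𝒜 : 𝒜 = Matrix.fromBlocks A B Bᵀ 0)
    (𝒜hat : Matrix (Fin n ⊕ Fin m) (Fin n ⊕ Fin m) ℝ)
    (h𝒜hat : 𝒜hat = Matrix.fromBlocks A B Bᵀ (-C))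
    (P : Matrix (Fin n ⊕ Fin m) (Fin n ⊕ Fin m) ℂ)
    (hP : P = (𝒜hat⁻¹ * 𝒜).map Complex.ofReal) :
    (∀ μ : ℂ, (∃ v : Fin n ⊕ Fin m → ℂ, v ≠ 0 ∧ P *ᵥ v = μ • v) →
      μ = 1 ∨ μ = 1 / 2) ∧
    Module.finrank ℂ (LinearMap.ker ((P - (1 : ℂ) • 1).mulVecLin)) = n ∧
    Module.finrank ℂ (LinearMap.ker ((P - ((1 : ℂ) / 2) • 1).mulVecLin)) = m := by
  classical
  -- `B` has trivial kernel
  have hBinj : Function.Injective B.mulVecLin := by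
    rw [← LinearMap.ker_eq_bot]
    have h1 := B.mulVecLin.finrank_range_add_finrank_ker
    rw [Matrix.rank] at hB
    rw [hB, Module.finrank_fintype_fun_eq_card, Fintype.card_fin] at h1
    have h2 : Module.finrank ℝ (LinearMap.ker B.mulVecLin) = 0 := by omega
    exact Submodule.finrank_eq_zero.mp h2
  -- the Schur complement `C` is positive definite
  have hCpd : C.PosDef := by
    rw [hC]
    refine Matrix.posDef_iff_dotProduct_mulVec.mpr ⟨?_, ?_⟩
    · have h := Matrix.isHermitian_conjTranspose_mul_mul B hA.inv.isHermitian
      simpa [Matrix.conjTranspose_eq_transpose_of_trivial] using h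
    · intro x hx
      have hBx : B *ᵥ x ≠ 0 := by
        intro h
        exact hx (hBinj (by simpa [Matrix.mulVecLin_apply] using h))
      have h2 := hA.inv.dotProduct_mulVec_pos hBx
      have key : x ⬝ᵥ ((Bᵀ * A⁻¹ * B) *ᵥ x) = (B *ᵥ x) ⬝ᵥ (A⁻¹ *ᵥ (B *ᵥ x)) := by
        rw [← mulVec_mulVec, ← mulVec_mulVec, dotProduct_mulVec, vecMul_transpose]
      simpa [key] using h2
  have hAu : IsUnit A.det := hA.det_pos.ne'.isUnit
  have : Invertible A := A.invertibleOfIsUnitDet hAu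
  -- `𝒜hat` is invertible
  have hHatdet : IsUnit 𝒜hat.det := by
    rw [h𝒜hat, det_fromBlocks₁₁, invOf_eq_nonsing_inv, ← hC]
    have h2 : -C - C = (-2 : ℝ) • C := by
      ext i j; simp [Matrix.smul_apply]; ring
    rw [h2, Matrix.det_smul]
    have h3 : ((-2 : ℝ)) ^ (Fintype.card (Fin m)) ≠ 0 := pow_ne_zero _ (by norm_num)
    exact hAu.mul ((isUnit_iff_ne_zero.mpr h3).mul hCpd.det_pos.ne'.isUnit)
  -- `𝒜hat * Q = 𝒜` with `Q` the block upper triangular matrix below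
  have hQ : 𝒜hat * Matrix.fromBlocks 1 ((1/2 : ℝ) • (A⁻¹ * B)) 0 ((1/2 : ℝ) • 1) = 𝒜 := by
    rw [h𝒜hat, h𝒜]
    have e11 : A * (1 : Matrix (Fin n) (Fin n) ℝ) + B * (0 : Matrix (Fin m) (Fin n) ℝ) = A := by
      simp
    have e12 : A * ((1/2:ℝ) • (A⁻¹*B)) + B * ((1/2:ℝ) • (1 : Matrix (Fin m) (Fin m) ℝ)) = B := by
      rw [Matrix.mul_smul, Matrix.mul_inv_cancel_left_of_invertible, Matrix.mul_smul,
        Matrix.mul_one, ← add_smul]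
      norm_num
    have e21 : Bᵀ * (1 : Matrix (Fin n) (Fin n) ℝ) + (-C) * (0 : Matrix (Fin m) (Fin n) ℝ) = Bᵀ := by
      simp
    have e22 : Bᵀ * ((1/2:ℝ) • (A⁻¹*B)) + (-C) * ((1/2:ℝ) • (1 : Matrix (Fin m) (Fin m) ℝ)) = 0 := by
      rw [Matrix.mul_smul, ← Matrix.mul_assoc, ← hC, Matrix.mul_smul, Matrix.mul_one]
      simp
    rw [fromBlocks_multiply, e11, e12, e21, e22]
  -- hence `𝒜hat⁻¹ * 𝒜 = Q`
  have hPQ : 𝒜hat⁻¹ * 𝒜 = Matrix.fromBlocks 1 ((1/2 : ℝ) • (A⁻¹ * B)) 0 ((1/2 : ℝ) • 1) := by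
    rw [← hQ, ← Matrix.mul_assoc, Matrix.nonsing_inv_mul _ hHatdet, Matrix.one_mul]
  -- explicit block form of `P`
  set Wc : Matrix (Fin n) (Fin m) ℂ := ((1/2:ℝ) • (A⁻¹ * B)).map Complex.ofReal with hWc
  have hPform : P = Matrix.fromBlocks (1 : Matrix (Fin n) (Fin n) ℂ) Wc
      (0 : Matrix (Fin m) (Fin n) ℂ) ((1/2 : ℂ) • (1 : Matrix (Fin m) (Fin m) ℂ)) := by
    rw [hP, hPQ, hWc]
    ext (i|i) (j|j) <;>
      simp [Matrix.one_apply, apply_ite Complex.ofReal]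
  refine ⟨?_, ?_, ?_⟩
  · -- every eigenvalue is `1` or `1/2`
    rintro μ ⟨v, hv, hmul⟩
    rw [hPform] at hmul
    set x : Fin n → ℂ := v ∘ Sum.inl with hx
    set y : Fin m → ℂ := v ∘ Sum.inr with hy
    have hv' : v = Sum.elim x y := (Sum.elim_comp_inl_inr v).symm
    rw [hv', fromBlocks_mulVec] at hmul
    by_cases hy0 : y = 0
    · left
      have hx0 : x ≠ 0 := by
        intro h
        apply hv
        rw [hv', h, hy0]
        ext (i|j) <;> rfl
      obtain ⟨i, hi⟩ := Function.ne_iff.mp hx0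
      have h1 := congrFun hmul (Sum.inl i)
      simp [hy0, Matrix.one_mulVec] at h1
      have h1' : (1:ℂ) * x i = μ * x i := by rw [one_mul]; exact h1
      exact (mul_right_cancel₀ hi h1').symm
    · right
      obtain ⟨j, hj⟩ := Function.ne_iff.mp hy0
      have h2 := congrFun hmul (Sum.inr j)
      simp [Matrix.smul_mulVec, Matrix.one_mulVec] at h2
      rcases h2 with h | h
      · rw [← h]; norm_num
      · exact absurd h hj
  · -- the eigenvalue `1` has multiplicity `n`
    have hmem : ∀ v : Fin n ⊕ Fin m → ℂ,
        v ∈ LinearMap.ker ((P - (1 : ℂ) • 1).mulVecLin) ↔ v ∘ Sum.inr = 0 := by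
      intro v
      rw [LinearMap.mem_ker, Matrix.mulVecLin_apply, Matrix.sub_mulVec, Matrix.smul_mulVec,
        Matrix.one_mulVec, hPform]
      nth_rewrite 1 [← Sum.elim_comp_inl_inr v]
      rw [fromBlocks_mulVec]
      constructor
      · intro h
        funext j
        have hj := congrFun h (Sum.inr j)
        simp [Matrix.smul_mulVec, Matrix.one_mulVec, sub_eq_zero] at hj
        have h2 : ((1:ℂ)/2 - 1) * (v (Sum.inr j)) = 0 := by linear_combination hj
        rcases mul_eq_zero.mp h2 with h3 | h3
        · norm_num at h3
        · exact h3
      · intro h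
        funext k
        cases k with
        | inl i =>
          simp [Matrix.one_mulVec, h, Pi.sub_apply]
        | inr j =>
          simp [Matrix.smul_mulVec, Matrix.one_mulVec, h, Pi.sub_apply,
            show v (Sum.inr j) = 0 from congrFun h j]
    have e : (LinearMap.ker ((P - (1 : ℂ) • 1).mulVecLin)) ≃ₗ[ℂ] (Fin n → ℂ) :=
      { toFun := fun v => (v : Fin n ⊕ Fin m → ℂ) ∘ Sum.inl
        map_add' := fun _ _ => rfl
        map_smul' := fun _ _ => rfl
        invFun := fun x => ⟨Sum.elim x 0, (hmem _).mpr (by funext j; rfl)⟩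
        left_inv := by
          rintro ⟨v, hv⟩
          apply Subtype.ext
          funext k
          cases k with
          | inl i => rfl
          | inr j => exact (congrFun ((hmem v).mp hv) j).symm
        right_inv := fun x => rfl }
    rw [e.finrank_eq, Module.finrank_fintype_fun_eq_card, Fintype.card_fin]
  · -- the eigenvalue `1/2` has multiplicity `m`
    have hmem : ∀ v : Fin n ⊕ Fin m → ℂ,
        v ∈ LinearMap.ker ((P - ((1 : ℂ) / 2) • 1).mulVecLin) ↔
          v ∘ Sum.inl = (-2 : ℂ) • (Wc *ᵥ (v ∘ Sum.inr)) := by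
      intro v
      rw [LinearMap.mem_ker, Matrix.mulVecLin_apply, Matrix.sub_mulVec, Matrix.smul_mulVec,
        Matrix.one_mulVec, hPform]
      nth_rewrite 1 [← Sum.elim_comp_inl_inr v]
      rw [fromBlocks_mulVec]
      constructor
      · intro h
        funext i
        have hi := congrFun h (Sum.inl i)
        simp [Matrix.one_mulVec, Pi.sub_apply] at hi
        simp only [Pi.smul_apply, smul_eq_mul]
        simp only [Function.comp_apply] at hi ⊢
        linear_combination (2 : ℂ) * hi
      · intro h
        funext k
        cases k with
        | inl i =>
          have hi := congrFun h i
          simp only [Pi.smul_apply, smul_eq_mul] at hi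
          simp [Matrix.one_mulVec, Pi.sub_apply]
          simp only [Function.comp_apply] at hi ⊢
          linear_combination ((1:ℂ)/2) * hi
        | inr j =>
          simp [Matrix.smul_mulVec, Matrix.one_mulVec, Pi.sub_apply]
    have e : (LinearMap.ker ((P - ((1 : ℂ) / 2) • 1).mulVecLin)) ≃ₗ[ℂ] (Fin m → ℂ) :=
      { toFun := fun v => (v : Fin n ⊕ Fin m → ℂ) ∘ Sum.inr
        map_add' := fun _ _ => rfl
        map_smul' := fun _ _ => rfl
        invFun := fun y => ⟨Sum.elim ((-2 : ℂ) • (Wc *ᵥ y)) y, (hmem _).mpr (by funext i; rfl)⟩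
        left_inv := by
          rintro ⟨v, hv⟩
          apply Subtype.ext
          funext k
          cases k with
          | inl i => exact (congrFun ((hmem v).mp hv) i).symm
          | inr j => rfl
        right_inv := fun y => rfl }
    rw [e.finrank_eq, Module.finrank_fintype_fun_eq_card, Fintype.card_fin]
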